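/- Let a = 10/√11 and k = 1/(2·11^{1/4}) (so k² = 1/(4√11)). Then the real function U(Z) = (4√30/√11) · (1 − tanh²(kZ)) tanh(kZ) / (1 + tanh²(kZ))² is a smooth real-valued solution of the stationary Swift–Hohenberg equation U⁗ + aU″ + U³ − U = 0 on all of ℝ, and U(Z) → 0 as Z → +∞ and as Z → −∞ (so U is homoclinic to 0). -/

import Mathlib

open Filter Topology

noncomputable section

/-- `k = 1/(2·11^{1/4})`. -/
def kSH : ℝ := 1 / (2 * (11:ℝ) ^ ((1:ℝ)/4))

/-- The homoclinic solution `U(Z) = (4√30/√11)(1 − tanh²(kZ)) tanh(kZ)/(1 + tanh²(kZ))²`. -/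
def USH : ℝ → ℝ := fun Z =>
  (4 * Real.sqrt 30 / Real.sqrt 11) *
    ((1 - Real.tanh (kSH * Z)^2) * Real.tanh (kSH * Z)) / (1 + Real.tanh (kSH * Z)^2)^2

namespace SHaux

def C : ℝ := 2 * Real.sqrt 30 / Real.sqrt 11
def b : ℝ := 2 * kSH

def g0 (w : ℝ) : ℝ := Real.sinh w / Real.cosh w ^ 2
def g1 (w : ℝ) : ℝ := (Real.cosh w ^ 2 - 2 * Real.sinh w ^ 2) / Real.cosh w ^ 3
def g2 (w : ℝ) : ℝ := (-5 * Real.sinh w * Real.cosh w ^ 2 + 6 * Real.sinh w ^ 3) / Real.cosh w ^ 4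
def g3 (w : ℝ) : ℝ :=
  (-5 * Real.cosh w ^ 4 + 28 * Real.sinh w ^ 2 * Real.cosh w ^ 2 - 24 * Real.sinh w ^ 4)
    / Real.cosh w ^ 5
def g4 (w : ℝ) : ℝ :=
  (61 * Real.sinh w * Real.cosh w ^ 4 - 180 * Real.sinh w ^ 3 * Real.cosh w ^ 2
    + 120 * Real.sinh w ^ 5) / Real.cosh w ^ 6

lemma hc (w : ℝ) : Real.cosh w ≠ 0 := (Real.cosh_pos w).ne'

lemma hd0 (w : ℝ) : HasDerivAt g0 (g1 w) w := by
  have h := (Real.hasDerivAt_sinh w).div ((Real.hasDerivAt_cosh w).pow 2)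
    (pow_ne_zero 2 (hc w))
  refine h.congr_deriv ?_
  have := hc w
  simp only [g1, Pi.pow_apply]
  field_simp
  ring

lemma hd1 (w : ℝ) : HasDerivAt g1 (g2 w) w := by
  have hnum : HasDerivAt (fun w => Real.cosh w ^ 2 - 2 * Real.sinh w ^ 2)
      (2 * Real.cosh w ^ 1 * Real.sinh w - 2 * (2 * Real.sinh w ^ 1 * Real.cosh w)) w :=
    ((Real.hasDerivAt_cosh w).pow 2).sub (((Real.hasDerivAt_sinh w).pow 2).const_mul 2)
  have h := hnum.div ((Real.hasDerivAt_cosh w).pow 3) (pow_ne_zero 3 (hc w))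
  refine h.congr_deriv ?_
  have := hc w
  simp only [g2, Pi.pow_apply]
  field_simp
  ring

lemma hd2 (w : ℝ) : HasDerivAt g2 (g3 w) w := by
  have hnum : HasDerivAt (fun w => -5 * Real.sinh w * Real.cosh w ^ 2 + 6 * Real.sinh w ^ 3)
      ((-5 * Real.cosh w) * Real.cosh w ^ 2 + (-5 * Real.sinh w) * (2 * Real.cosh w ^ 1 * Real.sinh w)
        + 6 * (3 * Real.sinh w ^ 2 * Real.cosh w)) w :=
    (((Real.hasDerivAt_sinh w).const_mul (-5)).mul ((Real.hasDerivAt_cosh w).pow 2)).add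
      (((Real.hasDerivAt_sinh w).pow 3).const_mul 6)
  have h := hnum.div ((Real.hasDerivAt_cosh w).pow 4) (pow_ne_zero 4 (hc w))
  refine h.congr_deriv ?_
  have := hc w
  simp only [g3, Pi.pow_apply]
  field_simp
  ring

lemma hd3 (w : ℝ) : HasDerivAt g3 (g4 w) w := by
  have hnum : HasDerivAt (fun w => -5 * Real.cosh w ^ 4 + 28 * Real.sinh w ^ 2 * Real.cosh w ^ 2
      - 24 * Real.sinh w ^ 4)
      (-5 * (4 * Real.cosh w ^ 3 * Real.sinh w)
        + ((28 * (2 * Real.sinh w ^ 1 * Real.cosh w)) * Real.cosh w ^ 2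
          + (28 * Real.sinh w ^ 2) * (2 * Real.cosh w ^ 1 * Real.sinh w))
        - 24 * (4 * Real.sinh w ^ 3 * Real.cosh w)) w :=
    ((((Real.hasDerivAt_cosh w).pow 4).const_mul (-5)).add
      ((((Real.hasDerivAt_sinh w).pow 2).const_mul 28).mul ((Real.hasDerivAt_cosh w).pow 2))).sub
      (((Real.hasDerivAt_sinh w).pow 4).const_mul 24)
  have h := hnum.div ((Real.hasDerivAt_cosh w).pow 5) (pow_ne_zero 5 (hc w))
  refine h.congr_deriv ?_
  have := hc w
  simp only [g4, Pi.pow_apply]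
  field_simp
  ring

lemma key (w : ℝ) : g4 w + 10 * g2 w + 120 * (g0 w) ^ 3 - 11 * g0 w = 0 := by
  have h := Real.cosh_sq w
  have hne := hc w
  unfold g0 g2 g4
  field_simp
  linear_combination (-(120 * Real.sinh w ^ 3)) * h

lemma hUSH : USH = fun Z => C * g0 (b * Z) := by
  funext Z
  have hx : b * Z = 2 * (kSH * Z) := by unfold b; ring
  set x := kSH * Z
  have hcx := hc x
  have hsq := Real.cosh_sq x
  have h11 : Real.sqrt 11 ≠ 0 := by positivity
  have htanh : Real.tanh x = Real.sinh x / Real.cosh x := Real.tanh_eq_sinh_div_cosh x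
  have hden : (1 : ℝ) + Real.tanh x ^ 2 ≠ 0 := by positivity
  unfold USH C g0
  rw [hx, Real.sinh_two_mul, Real.cosh_two_mul, htanh]
  have hden2 : Real.cosh x ^ 2 + Real.sinh x ^ 2 ≠ 0 := by positivity
  field_simp
  ring_nf
  linear_combination (4 * Real.sinh x) * hsq


lemma hbZ (Z : ℝ) : HasDerivAt (fun Z : ℝ => b * Z) b Z := by
  simpa using (hasDerivAt_id Z).const_mul b

lemma hderiv1 : deriv USH = fun Z => C * b * g1 (b * Z) := by
  funext Z
  rw [hUSH]
  have h := ((hd0 (b * Z)).comp Z (hbZ Z)).const_mul C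
  have h' : HasDerivAt (fun Z => C * g0 (b * Z)) (C * b * g1 (b * Z)) Z := by
    exact h.congr_deriv (by ring)
  exact h'.deriv

lemma hderiv2 : deriv (fun Z => C * b * g1 (b * Z)) = fun Z => C * b ^ 2 * g2 (b * Z) := by
  funext Z
  have h := ((hd1 (b * Z)).comp Z (hbZ Z)).const_mul (C * b)
  have h' : HasDerivAt (fun Z => C * b * g1 (b * Z)) (C * b ^ 2 * g2 (b * Z)) Z := by
    exact h.congr_deriv (by ring)
  exact h'.deriv

lemma hderiv3 : deriv (fun Z => C * b ^ 2 * g2 (b * Z)) = fun Z => C * b ^ 3 * g3 (b * Z) := by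
  funext Z
  have h := ((hd2 (b * Z)).comp Z (hbZ Z)).const_mul (C * b ^ 2)
  have h' : HasDerivAt (fun Z => C * b ^ 2 * g2 (b * Z)) (C * b ^ 3 * g3 (b * Z)) Z := by
    exact h.congr_deriv (by ring)
  exact h'.deriv

lemma hderiv4 : deriv (fun Z => C * b ^ 3 * g3 (b * Z)) = fun Z => C * b ^ 4 * g4 (b * Z) := by
  funext Z
  have h := ((hd3 (b * Z)).comp Z (hbZ Z)).const_mul (C * b ^ 3)
  have h' : HasDerivAt (fun Z => C * b ^ 3 * g3 (b * Z)) (C * b ^ 4 * g4 (b * Z)) Z := by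
    exact h.congr_deriv (by ring)
  exact h'.deriv

lemma hiter2 : iteratedDeriv 2 USH = fun Z => C * b ^ 2 * g2 (b * Z) := by
  rw [iteratedDeriv_succ, iteratedDeriv_one, hderiv1, hderiv2]

lemma hiter4 : iteratedDeriv 4 USH = fun Z => C * b ^ 4 * g4 (b * Z) := by
  rw [iteratedDeriv_succ, iteratedDeriv_succ, hiter2, hderiv3, hderiv4]

lemma hb2 : b ^ 2 = 1 / Real.sqrt 11 := by
  have h4 : ((11:ℝ) ^ ((1:ℝ)/4)) ^ 2 = (11:ℝ) ^ ((1:ℝ)/2) := by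
    rw [← Real.rpow_natCast ((11:ℝ) ^ ((1:ℝ)/4)) 2, ← Real.rpow_mul (by norm_num)]
    norm_num
  have hs : Real.sqrt 11 = (11:ℝ) ^ ((1:ℝ)/2) := Real.sqrt_eq_rpow 11
  have hne : (11:ℝ) ^ ((1:ℝ)/4) ≠ 0 := by positivity
  unfold b kSH
  rw [hs, ← h4]
  field_simp

lemma hb4 : b ^ 4 = 1 / 11 := by
  have : b ^ 4 = (b ^ 2) ^ 2 := by ring
  rw [this, hb2]
  rw [div_pow, one_pow, Real.sq_sqrt (by norm_num : (0:ℝ) ≤ 11)]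

lemma hC2 : C ^ 2 = 120 / 11 := by
  unfold C
  rw [div_pow, mul_pow, Real.sq_sqrt (by norm_num : (0:ℝ) ≤ 30),
    Real.sq_sqrt (by norm_num : (0:ℝ) ≤ 11)]
  norm_num

lemma ode (Z : ℝ) : iteratedDeriv 4 USH Z + (10 / Real.sqrt 11) * iteratedDeriv 2 USH Z
    + (USH Z)^3 - USH Z = 0 := by
  rw [hiter2, hiter4, hUSH]
  have h11 : Real.sqrt 11 ≠ 0 := by positivity
  have hs11 : Real.sqrt 11 * Real.sqrt 11 = 11 :=
    Real.mul_self_sqrt (by norm_num : (0:ℝ) ≤ 11)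
  have hk := key (b * Z)
  have hab2 : (10 / Real.sqrt 11) * b ^ 2 = 10 / 11 := by
    rw [hb2]; field_simp
    rw [Real.sq_sqrt (by norm_num : (0:ℝ) ≤ 11)]
  have hC3 : C ^ 3 = C * (120 / 11) := by rw [← hC2]; ring
  simp only
  calc C * b ^ 4 * g4 (b * Z) + 10 / Real.sqrt 11 * (C * b ^ 2 * g2 (b * Z))
        + (C * g0 (b * Z)) ^ 3 - C * g0 (b * Z)
      = C * b ^ 4 * g4 (b * Z) + ((10 / Real.sqrt 11) * b ^ 2) * C * g2 (b * Z)
        + C ^ 3 * g0 (b * Z) ^ 3 - C * g0 (b * Z) := by ring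
    _ = (C / 11) * (g4 (b * Z) + 10 * g2 (b * Z) + 120 * g0 (b * Z) ^ 3 - 11 * g0 (b * Z)) := by
        rw [hb4, hab2, hC3]; ring
    _ = 0 := by simp [hk]

lemma contDiff_g0 : ContDiff ℝ ⊤ g0 :=
  Real.contDiff_sinh.div (Real.contDiff_cosh.pow 2) (fun w => pow_ne_zero 2 (hc w))

lemma smooth (n : ℕ) : ContDiff ℝ n USH := by
  rw [hUSH]
  exact (contDiff_const.mul (contDiff_g0.comp ((contDiff_id).const_smul b))).of_le le_top

lemma tendsto_cosh_atTop : Tendsto Real.cosh atTop atTop := by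
  apply tendsto_atTop_mono (f := fun x => Real.exp x / 2)
  · intro x
    rw [Real.cosh_eq]
    have := Real.exp_pos (-x)
    linarith
  · exact Real.tendsto_exp_atTop.atTop_div_const two_pos

lemma tendsto_cosh_atBot : Tendsto Real.cosh atBot atTop := by
  have h : Real.cosh = fun x => Real.cosh (-x) := by funext x; rw [Real.cosh_neg]
  rw [h]
  exact tendsto_cosh_atTop.comp tendsto_neg_atBot_atTop

lemma g0_bound (w : ℝ) : ‖g0 w‖ ≤ 1 / Real.cosh w := by
  have hcw := Real.cosh_pos w
  have h1 : |Real.sinh w| ≤ Real.cosh w := by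
    rw [Real.abs_sinh, ← Real.cosh_abs w]
    exact (Real.sinh_lt_cosh |w|).le
  rw [g0, Real.norm_eq_abs, abs_div, abs_pow, abs_of_pos hcw]
  rw [div_le_div_iff₀ (by positivity) hcw]
  calc |Real.sinh w| * Real.cosh w ≤ Real.cosh w * Real.cosh w :=
        mul_le_mul_of_nonneg_right h1 hcw.le
    _ = 1 * Real.cosh w ^ 2 := by ring

lemma tendsto_g0_atTop : Tendsto g0 atTop (𝓝 0) := by
  apply squeeze_zero_norm g0_bound
  simp only [one_div]
  exact tendsto_cosh_atTop.inv_tendsto_atTop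

lemma tendsto_g0_atBot : Tendsto g0 atBot (𝓝 0) := by
  apply squeeze_zero_norm g0_bound
  simp only [one_div]
  exact tendsto_cosh_atBot.inv_tendsto_atTop

lemma hbpos : 0 < b := by
  unfold b kSH
  positivity

lemma tendstoTop : Tendsto USH atTop (𝓝 0) := by
  rw [hUSH]
  have h1 : Tendsto (fun Z : ℝ => b * Z) atTop atTop :=
    (tendsto_id.const_mul_atTop hbpos)
  have := (tendsto_g0_atTop.comp h1).const_mul C
  simpa using this

lemma tendstoBot : Tendsto USH atBot (𝓝 0) := by
  rw [hUSH]
  have h1 : Tendsto (fun Z : ℝ => b * Z) atBot atBot :=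
    (tendsto_id.const_mul_atBot hbpos)
  have := (tendsto_g0_atBot.comp h1).const_mul C
  simpa using this

end SHaux

/-- For `a = 10/√11`, the function `USH` is a smooth real-valued solution of the
stationary Swift–Hohenberg equation `U⁗ + aU″ + U³ − U = 0` on `ℝ`, homoclinic to `0`. -/
theorem USH_is_smooth_homoclinic_solution :
    (∀ n : ℕ, ContDiff ℝ n USH) ∧
    (∀ Z : ℝ, iteratedDeriv 4 USH Z + (10 / Real.sqrt 11) * iteratedDeriv 2 USH Z
      + (USH Z)^3 - USH Z = 0) ∧
    Tendsto USH atTop (𝓝 0) ∧ Tendsto USH atBot (𝓝 0) := by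
  exact ⟨SHaux.smooth, SHaux.ode, SHaux.tendstoTop, SHaux.tendstoBot⟩

end
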